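/- Let y_1, y_2 be real numbers, γ a real order, and m, n nonnegative integers. Then Σ_{a=0}^{n} (−1)^a C(m+n+1, n−a) B_{n−a}^{(γ)}(y_1) E_{m+a+1}^{(γ)}(y_2) − Σ_{a=0}^{m} (−1)^a C(m+n+1, m−a) E_{m−a}^{(γ)}(y_2) B_{n+a+1}^{(γ)}(y_1) = (−1)^n 2^{m+n+1} B_{m+n+1}^{(γ)}((γ − y_1 + y_2)/2). -/

import Mathlib

/-- Higher-order Euler polynomial `E_m^{(α)}(z)` of real order `α`, defined as the `m`-th
Taylor coefficient (times `m!`) of the generating function `(2/(e^u+1))^α e^{uz}` at `u = 0`. -/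
noncomputable def eulerH (α : ℝ) (m : ℕ) (z : ℝ) : ℝ :=
  iteratedDeriv m (fun u : ℝ => (2 / (Real.exp u + 1)) ^ α * Real.exp (u * z)) 0

/-- Higher-order Bernoulli polynomial `B_m^{(α)}(z)` of real order `α`, defined as the `m`-th
Taylor coefficient (times `m!`) of the generating function `(u/(e^u-1))^α e^{uz}` at `u = 0`
(the removable singularity at `u = 0` being filled in with the limit value `1`). -/
noncomputable def bernoulliH (α : ℝ) (m : ℕ) (z : ℝ) : ℝ :=
  iteratedDeriv m
    (fun u : ℝ => (if u = 0 then (1 : ℝ) else u / (Real.exp u - 1)) ^ α * Real.exp (u * z)) 0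

open scoped ContDiff
open Real Finset

/-! ### Auxiliary material -/

/-- The base of the Bernoulli generating function, with singularity filled in. -/
noncomputable def bB : ℝ → ℝ := fun u => if u = 0 then (1:ℝ) else u / (Real.exp u - 1)

lemma expm1_ne {u : ℝ} (hu : u ≠ 0) : Real.exp u - 1 ≠ 0 := by
  simp [sub_eq_zero, Real.exp_eq_one_iff, hu]

lemma bB_pos (u : ℝ) : 0 < bB u := by
  unfold bB
  split
  · norm_num
  · rename_i hu
    rcases lt_or_gt_of_ne hu with h | h
    · exact div_pos_iff.mpr (Or.inr ⟨h, by simpa using Real.exp_lt_one_iff.mpr h⟩)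
    · exact div_pos h (by simpa using Real.one_lt_exp_iff.mpr h)

lemma bB_eq : bB = fun u => (dslope (fun v => Real.exp v - 1) 0 u)⁻¹ := by
  funext u
  rcases eq_or_ne u 0 with h | h
  · subst h
    have hd : deriv (fun v => Real.exp v - 1) 0 = 1 := by
      simp [deriv_sub_const]
    simp [bB, dslope_same, hd]
  · rw [dslope_of_ne _ h, slope_def_field]
    simp [bB, if_neg h, inv_div]

lemma dslope_ne (u : ℝ) : dslope (fun v => Real.exp v - 1) 0 u ≠ 0 := by
  have h := bB_pos u
  rw [bB_eq] at h
  exact (inv_pos.mp h).ne'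

lemma contDiff_bB : ContDiff ℝ ∞ bB := by
  rw [bB_eq, contDiff_iff_contDiffAt]
  intro u
  apply ContDiffAt.inv _ (dslope_ne u)
  rcases eq_or_ne u 0 with h | h
  · subst h
    have hA : AnalyticAt ℝ (fun v => Real.exp v - 1) 0 :=
      analyticAt_rexp.sub analyticAt_const
    obtain ⟨p, hp⟩ := hA
    exact (hp.has_fpower_series_dslope_fslope).analyticAt.contDiffAt
  · have hev : dslope (fun v => Real.exp v - 1) 0 =ᶠ[nhds u]
        (fun v => (Real.exp v - 1) / v) := by
      filter_upwards [eventually_ne_nhds h] with v hv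
      rw [dslope_of_ne _ hv, slope_def_field]
      simp
    have hsm : ContDiffAt ℝ ∞ (fun v => (Real.exp v - 1) / v) u :=
      ((Real.contDiff_exp.contDiffAt.sub contDiffAt_const).div contDiffAt_id h).of_le le_top
    exact hsm.congr_of_eventuallyEq hev

/-- The Bernoulli generating function. -/
noncomputable def fBf (γ y : ℝ) : ℝ → ℝ := fun u => bB u ^ γ * Real.exp (u * y)

/-- The Euler generating function. -/
noncomputable def fEf (γ y : ℝ) : ℝ → ℝ :=
  fun u => (2 / (Real.exp u + 1)) ^ γ * Real.exp (u * y)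

lemma bernoulliH_def (γ : ℝ) (j : ℕ) (y : ℝ) :
    bernoulliH γ j y = iteratedDeriv j (fBf γ y) 0 := rfl

lemma eulerH_def (γ : ℝ) (j : ℕ) (y : ℝ) :
    eulerH γ j y = iteratedDeriv j (fEf γ y) 0 := rfl

lemma contDiff_fBf (γ y : ℝ) : ContDiff ℝ ∞ (fBf γ y) := by
  apply ContDiff.mul
  · rw [contDiff_iff_contDiffAt]
    intro u
    exact contDiff_bB.contDiffAt.rpow_const_of_ne (bB_pos u).ne'
  · exact Real.contDiff_exp.comp (contDiff_id.mul contDiff_const) |>.of_le le_top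

lemma contDiff_fEf (γ y : ℝ) : ContDiff ℝ ∞ (fEf γ y) := by
  apply ContDiff.mul
  · rw [contDiff_iff_contDiffAt]
    intro u
    have hpos : (0:ℝ) < 2 / (Real.exp u + 1) :=
      div_pos two_pos (by positivity)
    exact ((contDiffAt_const.div
      (Real.contDiff_exp.contDiffAt.add contDiffAt_const) (by positivity)).rpow_const_of_ne
      hpos.ne').of_le le_top
  · exact Real.contDiff_exp.comp (contDiff_id.mul contDiff_const) |>.of_le le_top

lemma diff_iD {f : ℝ → ℝ} (hf : ContDiff ℝ ∞ f) (k : ℕ) :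
    Differentiable ℝ (iteratedDeriv k f) := by
  rw [iteratedDeriv_eq_iterate]
  exact (hf.iterate_deriv k).differentiable (by simp)

lemma hasDerivAt_iD {f : ℝ → ℝ} (hf : ContDiff ℝ ∞ f) (k : ℕ) (x : ℝ) :
    HasDerivAt (iteratedDeriv k f) (iteratedDeriv (k+1) f x) x := by
  rw [iteratedDeriv_succ]
  exact ((diff_iD hf k) x).hasDerivAt

lemma iD_scale {f : ℝ → ℝ} (hf : ContDiff ℝ ∞ f) (c : ℝ) (n : ℕ) :
    iteratedDeriv n (fun x => f (c * x)) = fun x => c ^ n * iteratedDeriv n f (c * x) := by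
  induction n with
  | zero => simp
  | succ n ih =>
    funext x
    rw [iteratedDeriv_succ, ih]
    have h : HasDerivAt (fun x => c ^ n * iteratedDeriv n f (c * x))
        (c ^ n * (iteratedDeriv (n+1) f (c * x) * c)) x := by
      exact (((hasDerivAt_iD hf n (c * x)).comp x
        (by simpa using (hasDerivAt_id x).const_mul c))).const_mul _
    rw [h.deriv]
    ring

lemma binom_conv (u v : ℕ → ℝ) (n : ℕ) :
    (∑ j ∈ Finset.range (n+1), (n.choose j : ℝ) * (u (j+1) * v (n-j)))
      + ∑ j ∈ Finset.range (n+1), (n.choose j : ℝ) * (u j * v (n+1-j))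
    = ∑ j ∈ Finset.range (n+2), ((n+1).choose j : ℝ) * (u j * v (n+1-j)) := by
  rw [Finset.sum_range_succ' (fun j => ((n+1).choose j : ℝ) * (u j * v (n+1-j))) (n+1)]
  have h1 : ∀ j ∈ Finset.range (n+1),
      (((n+1).choose (j+1) : ℝ)) * (u (j+1) * v (n+1-(j+1)))
      = (n.choose j : ℝ) * (u (j+1) * v (n-j))
        + (n.choose (j+1) : ℝ) * (u (j+1) * v (n-j)) := by
    intro j _
    rw [Nat.choose_succ_succ]
    have h : n+1-(j+1) = n-j := by omega
    rw [h]; push_cast; ring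
  rw [Finset.sum_congr rfl h1, Finset.sum_add_distrib]
  have h2 : ∑ j ∈ Finset.range (n+1), (n.choose j : ℝ) * (u j * v (n+1-j))
      = (∑ j ∈ Finset.range (n+1), (n.choose (j+1) : ℝ) * (u (j+1) * v (n-j)))
        + ((n+1).choose 0 : ℝ) * (u 0 * v (n+1-0)) := by
    rw [Finset.sum_range_succ' (fun j => (n.choose j : ℝ) * (u j * v (n+1-j))) n,
      Finset.sum_range_succ (fun j => (n.choose (j+1) : ℝ) * (u (j+1) * v (n-j))) n]
    simp [Nat.succ_sub_succ, Nat.choose_succ_self]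
  rw [h2]
  ring

lemma iD_leibniz {f g : ℝ → ℝ} (hf : ContDiff ℝ ∞ f) (hg : ContDiff ℝ ∞ g) (n : ℕ) :
    iteratedDeriv n (fun x => f x * g x) = fun x =>
      ∑ j ∈ Finset.range (n+1), (n.choose j : ℝ) *
        (iteratedDeriv j f x * iteratedDeriv (n-j) g x) := by
  induction n with
  | zero => simp
  | succ n ih =>
    funext x
    rw [iteratedDeriv_succ, ih]
    have h : HasDerivAt (fun x => ∑ j ∈ Finset.range (n+1), (n.choose j : ℝ) *
        (iteratedDeriv j f x * iteratedDeriv (n-j) g x))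
        (∑ j ∈ Finset.range (n+1), (n.choose j : ℝ) *
          (iteratedDeriv (j+1) f x * iteratedDeriv (n-j) g x +
            iteratedDeriv j f x * iteratedDeriv (n-j+1) g x)) x := by
      apply HasDerivAt.fun_sum
      intro j _
      exact (((hasDerivAt_iD hf j x).mul (hasDerivAt_iD hg (n-j) x))).const_mul _
    rw [h.deriv]
    have key : ∀ j ∈ Finset.range (n+1), (n.choose j : ℝ) *
          (iteratedDeriv (j+1) f x * iteratedDeriv (n-j) g x +
            iteratedDeriv j f x * iteratedDeriv (n-j+1) g x)
        = (n.choose j : ℝ) * (iteratedDeriv (j+1) f x * iteratedDeriv (n-j) g x)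
          + (n.choose j : ℝ) * (iteratedDeriv j f x * iteratedDeriv (n+1-j) g x) := by
      intro j hj
      rw [Finset.mem_range] at hj
      have h : n - j + 1 = n + 1 - j := by omega
      rw [h]
      ring
    rw [Finset.sum_congr rfl key, Finset.sum_add_distrib]
    exact binom_conv (fun j => iteratedDeriv j f x) (fun j => iteratedDeriv j g x) n

lemma bB_base (u : ℝ) :
    bB (-u) * (2 / (Real.exp u + 1)) = bB (2*u) * Real.exp u := by
  rcases eq_or_ne u 0 with h | h
  · subst h; norm_num [bB]
  · have h1 : (-u : ℝ) ≠ 0 := neg_ne_zero.mpr h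
    have h2 : (2*u : ℝ) ≠ 0 := by simpa using h
    rw [show bB (-u) = (-u) / (Real.exp (-u) - 1) from if_neg h1,
        show bB (2*u) = (2*u) / (Real.exp (2*u) - 1) from if_neg h2]
    have e1 : Real.exp (-u) - 1 ≠ 0 := expm1_ne h1
    have e2 : Real.exp (2*u) - 1 ≠ 0 := expm1_ne h2
    have e3 : Real.exp u + 1 ≠ 0 := by positivity
    have e4 : Real.exp u ≠ 0 := (Real.exp_pos u).ne'
    rw [Real.exp_neg] at e1 ⊢
    rw [show (2:ℝ)*u = u + u from by ring, Real.exp_add] at e2 ⊢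
    have e6 : (1:ℝ) - Real.exp u ≠ 0 := by
      intro hc
      exact h ((Real.exp_eq_one_iff _).mp (by linarith))
    rw [show (Real.exp u)⁻¹ - 1 = (1 - Real.exp u)/Real.exp u from by field_simp,
      div_div_eq_mul_div]
    rw [div_mul_div_comm, div_mul_eq_mul_div, div_eq_div_iff (mul_ne_zero e6 e3) e2]
    ring

lemma keyfun (γ y₁ y₂ u : ℝ) :
    fBf γ y₁ (-u) * fEf γ y₂ u = fBf γ ((γ - y₁ + y₂)/2) (2*u) := by
  show (bB (-u) ^ γ * Real.exp ((-u) * y₁)) * ((2 / (Real.exp u + 1)) ^ γ * Real.exp (u * y₂))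
    = bB (2*u) ^ γ * Real.exp ((2*u) * ((γ - y₁ + y₂)/2))
  have h2 : (0:ℝ) ≤ 2 / (Real.exp u + 1) := by positivity
  have hA : bB (-u) ^ γ * (2 / (Real.exp u + 1)) ^ γ
      = bB (2*u) ^ γ * Real.exp u ^ γ := by
    rw [← Real.mul_rpow (bB_pos _).le h2, bB_base u,
      Real.mul_rpow (bB_pos _).le (Real.exp_pos u).le]
  have hexp : Real.exp u ^ γ = Real.exp (u * γ) := by
    rw [Real.rpow_def_of_pos (Real.exp_pos u), Real.log_exp]
  calc (bB (-u) ^ γ * Real.exp ((-u) * y₁)) * ((2 / (Real.exp u + 1)) ^ γ * Real.exp (u * y₂))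
      = (bB (-u) ^ γ * (2 / (Real.exp u + 1)) ^ γ)
          * (Real.exp ((-u) * y₁) * Real.exp (u * y₂)) := by ring
    _ = bB (2*u) ^ γ * (Real.exp (u*γ) * (Real.exp ((-u) * y₁) * Real.exp (u * y₂))) := by
        rw [hA, hexp]; ring
    _ = bB (2*u) ^ γ * Real.exp ((2*u) * ((γ - y₁ + y₂)/2)) := by
        rw [← Real.exp_add, ← Real.exp_add,
          show u*γ + ((-u) * y₁ + u * y₂) = (2*u) * ((γ - y₁ + y₂)/2) from by ring]

lemma star (γ y₁ y₂ : ℝ) (N : ℕ) :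
    ∑ j ∈ Finset.range (N+1), (N.choose j : ℝ) *
        (((-1:ℝ)^j * bernoulliH γ j y₁) * eulerH γ (N-j) y₂)
      = 2^N * bernoulliH γ N ((γ - y₁ + y₂)/2) := by
  have hfBn : ContDiff ℝ ∞ (fun u => fBf γ y₁ (-u)) :=
    (contDiff_fBf γ y₁).comp contDiff_neg
  have hL := congrFun (iD_leibniz hfBn (contDiff_fEf γ y₂) N) 0
  have hprod : (fun u => fBf γ y₁ (-u) * fEf γ y₂ u)
      = fun u => fBf γ ((γ - y₁ + y₂)/2) (2*u) := by
    funext u; exact keyfun γ y₁ y₂ u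
  have hR := congrFun (iD_scale (contDiff_fBf γ ((γ - y₁ + y₂)/2)) 2 N) 0
  calc ∑ j ∈ Finset.range (N+1), (N.choose j : ℝ) *
        (((-1:ℝ)^j * bernoulliH γ j y₁) * eulerH γ (N-j) y₂)
      = iteratedDeriv N (fun u => fBf γ y₁ (-u) * fEf γ y₂ u) 0 := by
        rw [hL]
        apply Finset.sum_congr rfl
        intro j _
        rw [bernoulliH_def, eulerH_def, iteratedDeriv_comp_neg j (fBf γ y₁) 0]
        simp [smul_eq_mul, mul_assoc]
    _ = iteratedDeriv N (fun u => fBf γ ((γ - y₁ + y₂)/2) (2*u)) 0 := by rw [hprod]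
    _ = 2^N * bernoulliH γ N ((γ - y₁ + y₂)/2) := by
        rw [hR, bernoulliH_def]
        norm_num

theorem stmt_16 (y₁ y₂ γ : ℝ) (m n : ℕ) :
    (∑ a ∈ Finset.range (n + 1), (-1 : ℝ) ^ a * (Nat.choose (m + n + 1) (n - a) : ℝ) *
        bernoulliH γ (n - a) y₁ * eulerH γ (m + a + 1) y₂)
      - (∑ a ∈ Finset.range (m + 1), (-1 : ℝ) ^ a * (Nat.choose (m + n + 1) (m - a) : ℝ) *
        eulerH γ (m - a) y₂ * bernoulliH γ (n + a + 1) y₁)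
    = (-1 : ℝ) ^ n * 2 ^ (m + n + 1) * bernoulliH γ (m + n + 1) ((γ - y₁ + y₂) / 2) := by
  set N := m + n + 1 with hN
  have hN' : N = m + n + 1 := hN
  set T : ℕ → ℝ := fun j => (N.choose j : ℝ) *
    (((-1:ℝ)^j * bernoulliH γ j y₁) * eulerH γ (N-j) y₂) with hT
  have hsplit : ∑ j ∈ Finset.range (N+1), T j
      = (∑ j ∈ Finset.range (n+1), T j) + ∑ a ∈ Finset.range (m+1), T (n+1+a) := by
    rw [show N + 1 = (n+1) + (m+1) from by omega, Finset.sum_range_add]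
  have hpow : ∀ k : ℕ, ((-1:ℝ))^k * (-1)^k = 1 := by
    intro k; rw [← mul_pow]; norm_num
  have h1 : ∑ a ∈ Finset.range (n + 1), (-1 : ℝ) ^ a * (N.choose (n - a) : ℝ) *
        bernoulliH γ (n - a) y₁ * eulerH γ (m + a + 1) y₂
      = (-1:ℝ)^n * ∑ j ∈ Finset.range (n+1), T j := by
    rw [Finset.mul_sum, ← Finset.sum_range_reflect (fun j => (-1:ℝ)^n * T j) (n+1)]
    apply Finset.sum_congr rfl
    intro a ha
    rw [Finset.mem_range] at ha
    have e1 : n + 1 - 1 - a = n - a := by omega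
    have e2 : N - (n - a) = m + a + 1 := by omega
    simp only [e1, hT, e2]
    have hsgn : ((-1:ℝ))^n * (-1)^(n-a) = (-1)^a := by
      have h5 : (-1:ℝ)^n = (-1)^(n-a) * (-1)^a := by
        rw [← pow_add]; congr 1; omega
      rw [h5, mul_comm ((-1:ℝ)^(n-a)) ((-1:ℝ)^a), mul_assoc, hpow, mul_one]
    rw [← hsgn]
    ring
  have h2 : ∑ a ∈ Finset.range (m + 1), (-1 : ℝ) ^ a * (N.choose (m - a) : ℝ) *
        eulerH γ (m - a) y₂ * bernoulliH γ (n + a + 1) y₁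
      = -((-1:ℝ)^n * ∑ a ∈ Finset.range (m+1), T (n+1+a)) := by
    rw [Finset.mul_sum, ← Finset.sum_neg_distrib]
    apply Finset.sum_congr rfl
    intro a ha
    rw [Finset.mem_range] at ha
    have e3 : N - (n+a+1) = m - a := by omega
    have e4 : N.choose (n+a+1) = N.choose (m-a) := by
      rw [← e3, Nat.choose_symm (show n+a+1 ≤ N from by omega)]
    have e5 : n+1+a = n+a+1 := by omega
    simp only [hT, e5, e3, e4]
    have hsgn2 : ((-1:ℝ))^(n+a+1) = -((-1)^n * (-1)^a) := by
      rw [pow_add, pow_add]; ring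
    rw [hsgn2]
    have h6 := hpow n
    calc (-1:ℝ) ^ a * (N.choose (m-a) : ℝ) * eulerH γ (m - a) y₂ * bernoulliH γ (n + a + 1) y₁
        = ((-1:ℝ)^n * (-1)^n) * ((-1:ℝ) ^ a * (N.choose (m-a) : ℝ) * eulerH γ (m - a) y₂
            * bernoulliH γ (n + a + 1) y₁) := by rw [h6, one_mul]
      _ = -((-1:ℝ)^n * ((N.choose (m-a) : ℝ) * (-((-1)^n * (-1)^a)
            * bernoulliH γ (n + a + 1) y₁ * eulerH γ (m - a) y₂))) := by ring
  rw [h1, h2, sub_neg_eq_add, ← mul_add, ← hsplit]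
  have hstar := star γ y₁ y₂ N
  have hTeq : ∑ j ∈ Finset.range (N+1), T j
      = ∑ j ∈ Finset.range (N+1), (N.choose j : ℝ) *
        (((-1:ℝ)^j * bernoulliH γ j y₁) * eulerH γ (N-j) y₂) := rfl
  rw [hTeq, hstar, ← mul_assoc]
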